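/- For every concurrent game structure G with a target set T ⊆ S of states and every ε > 0, there exists a memoryless strategy σ₁ for player 1 such that for all states s ∈ S, inf over all player-2 strategies σ₂ of Pr_s^{σ₁,σ₂}(Reach(T)) is at least ⟨1⟩val(Reach(T))(s) − ε; that is, memoryless ε-optimal strategies exist for concurrent reachability games. -/

import Mathlib

open scoped Classical

/-- A (two-player) concurrent game structure: a finite state space `S`, a finite
set `M` of moves, move assignments `Γ₁ Γ₂ : S → Finset M`, and a probabilistic
transition function `δ`. -/
structure CGame (S : Type) (M : Type) where
  Γ₁ : S → Finset M
  Γ₂ : S → Finset M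
  δ : S → M → M → S → ℝ

namespace CGame

variable {S M : Type} [Fintype S] [DecidableEq S] [Fintype M] [DecidableEq M]

/-- Well-formedness of a concurrent game structure: move sets are nonempty and
`δ s a b` is a probability distribution over states. -/
def IsGame (G : CGame S M) : Prop :=
  (∀ s, (G.Γ₁ s).Nonempty) ∧ (∀ s, (G.Γ₂ s).Nonempty) ∧
    (∀ s a b t, 0 ≤ G.δ s a b t) ∧ (∀ s a b, (∑ t, G.δ s a b t) = 1)

/-- `x : M → ℝ` is a probability distribution supported on `A`. -/
def IsDistOn (A : Finset M) (x : M → ℝ) : Prop :=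
  (∀ a, 0 ≤ x a) ∧ (∀ a, x a ≠ 0 → a ∈ A) ∧ (∑ a, x a) = 1

/-- A selector for player 1. -/
def IsSel1 (G : CGame S M) (ξ : S → M → ℝ) : Prop := ∀ s, IsDistOn (G.Γ₁ s) (ξ s)

/-- A selector for player 2. -/
def IsSel2 (G : CGame S M) (ξ : S → M → ℝ) : Prop := ∀ s, IsDistOn (G.Γ₂ s) (ξ s)

/-- A strategy for player 1: maps a history (past states `w` and current state `s`)
to a distribution over the moves available at `s`. -/
def IsStrat1 (G : CGame S M) (σ : List S → S → M → ℝ) : Prop :=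
  ∀ w s, IsDistOn (G.Γ₁ s) (σ w s)

/-- A strategy for player 2. -/
def IsStrat2 (G : CGame S M) (σ : List S → S → M → ℝ) : Prop :=
  ∀ w s, IsDistOn (G.Γ₂ s) (σ w s)

/-- The memoryless strategy induced by a selector. -/
def ml (ξ : S → M → ℝ) : List S → S → M → ℝ := fun _ s => ξ s

/-- The pure (Dirac) distribution on a move `b`. -/
def pureDist (b : M) : M → ℝ := fun b' => if b' = b then 1 else 0

/-- The player-1 selector choosing all available moves uniformly at random. -/
noncomputable def uniformSel (G : CGame S M) : S → M → ℝ :=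
  fun s a => if a ∈ G.Γ₁ s then (1 : ℝ) / (G.Γ₁ s).card else 0

/-- Probability of reaching `T` within `n` steps, starting from history `w`
and current state `s`, under strategies `σ₁, σ₂`. -/
noncomputable def reachW (G : CGame S M) (σ₁ σ₂ : List S → S → M → ℝ) (T : Set S) :
    ℕ → List S → S → ℝ
  | 0, _, s => if s ∈ T then 1 else 0
  | n + 1, w, s =>
      if s ∈ T then 1
      else ∑ a : M, ∑ b : M, ∑ t : S,
        σ₁ w s a * σ₂ w s b * G.δ s a b t * reachW G σ₁ σ₂ T n (w ++ [s]) t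

/-- Probability of staying in `F` for `n` steps, starting from history `w`
and current state `s`, under strategies `σ₁, σ₂`. -/
noncomputable def safeW (G : CGame S M) (σ₁ σ₂ : List S → S → M → ℝ) (F : Set S) :
    ℕ → List S → S → ℝ
  | 0, _, s => if s ∈ F then 1 else 0
  | n + 1, w, s =>
      if s ∈ F then
        ∑ a : M, ∑ b : M, ∑ t : S,
          σ₁ w s a * σ₂ w s b * G.δ s a b t * safeW G σ₁ σ₂ F n (w ++ [s]) t
      else 0

/-- `Pr_s^{σ₁,σ₂}(Reach T)`: probability of eventually reaching `T` from `s`. -/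
noncomputable def prReach (G : CGame S M) (σ₁ σ₂ : List S → S → M → ℝ) (T : Set S)
    (s : S) : ℝ :=
  ⨆ n : ℕ, reachW G σ₁ σ₂ T n [] s

/-- `Pr_s^{σ₁,σ₂}(Safe F)`: probability that the play stays in `F` forever. -/
noncomputable def prSafe (G : CGame S M) (σ₁ σ₂ : List S → S → M → ℝ) (F : Set S)
    (s : S) : ℝ :=
  ⨅ n : ℕ, safeW G σ₁ σ₂ F n [] s

/-- `⟨1⟩val^{σ₁}(Reach T)(s) = inf_{σ₂} Pr_s^{σ₁,σ₂}(Reach T)`. -/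
noncomputable def valReachUnder (G : CGame S M) (σ₁ : List S → S → M → ℝ) (T : Set S)
    (s : S) : ℝ :=
  ⨅ σ₂ : {σ // IsStrat2 G σ}, prReach G σ₁ σ₂.1 T s

/-- `⟨1⟩val(Reach T)(s) = sup_{σ₁} inf_{σ₂} Pr_s^{σ₁,σ₂}(Reach T)`. -/
noncomputable def valReach (G : CGame S M) (T : Set S) (s : S) : ℝ :=
  ⨆ σ₁ : {σ // IsStrat1 G σ}, valReachUnder G σ₁.1 T s

/-- `⟨1⟩val^{σ₁}(Safe F)(s) = inf_{σ₂} Pr_s^{σ₁,σ₂}(Safe F)`. -/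
noncomputable def valSafeUnder (G : CGame S M) (σ₁ : List S → S → M → ℝ) (F : Set S)
    (s : S) : ℝ :=
  ⨅ σ₂ : {σ // IsStrat2 G σ}, prSafe G σ₁ σ₂.1 F s

/-- `⟨1⟩val(Safe F)(s) = sup_{σ₁} inf_{σ₂} Pr_s^{σ₁,σ₂}(Safe F)`. -/
noncomputable def valSafe (G : CGame S M) (F : Set S) (s : S) : ℝ :=
  ⨆ σ₁ : {σ // IsStrat1 G σ}, valSafeUnder G σ₁.1 F s

/-- `W₂ = {s | ⟨1⟩val(Reach T)(s) = 0}`. -/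
noncomputable def W2 (G : CGame S M) (T : Set S) : Set S := {s | valReach G T s = 0}

/-- `W₁ = {s | ⟨1⟩val(Safe F)(s) = 1}`. -/
noncomputable def W1 (G : CGame S M) (F : Set S) : Set S := {s | valSafe G F s = 1}

/-- A state is absorbing if for all moves the successor is the state itself. -/
def Absorbing (G : CGame S M) (s : S) : Prop := ∀ a b, G.δ s a b s = 1

/-- A player-1 strategy is proper if against every player-2 strategy, from every
state the set `T ∪ W₂` is reached with probability 1. -/
noncomputable def Proper (G : CGame S M) (T : Set S) (σ₁ : List S → S → M → ℝ) : Prop :=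
  ∀ σ₂, IsStrat2 G σ₂ → ∀ s, prReach G σ₁ σ₂ (T ∪ W2 G T) s = 1

/-- `Pre_{ξ₁,ξ₂}(v)(s)`: one-step expectation of `v` at `s` when the players use the
one-state selectors `x, y`. -/
noncomputable def preSS (G : CGame S M) (v : S → ℝ) (s : S) (x y : M → ℝ) : ℝ :=
  ∑ a : M, ∑ b : M, ∑ t : S, v t * G.δ s a b t * x a * y b

/-- `Pre_{1:ξ₁}(v)(s) = inf_{ξ₂} Pre_{ξ₁,ξ₂}(v)(s)`. -/
noncomputable def pre1Sel (G : CGame S M) (v : S → ℝ) (s : S) (x : M → ℝ) : ℝ :=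
  ⨅ y : {y : M → ℝ // IsDistOn (G.Γ₂ s) y}, preSS G v s x y.1

/-- `Pre₁(v)(s) = sup_{ξ₁} inf_{ξ₂} Pre_{ξ₁,ξ₂}(v)(s)`. -/
noncomputable def pre1 (G : CGame S M) (v : S → ℝ) (s : S) : ℝ :=
  ⨆ x : {x : M → ℝ // IsDistOn (G.Γ₁ s) x}, pre1Sel G v s x.1

/-- The value-iteration sequence: `u 0 = [T]`, `u (k+1) = Pre₁ (u k)`. -/
noncomputable def valIter (G : CGame S M) (T : Set S) : ℕ → S → ℝ
  | 0 => fun s => if s ∈ T then 1 else 0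
  | n + 1 => fun s => pre1 G (valIter G T n) s

/-- The entry time `ℓ_k(s) = min {j ≤ k | u_j(s) = u_k(s)}`. -/
noncomputable def entryTime (G : CGame S M) (T : Set S) (k : ℕ) (s : S) : ℕ :=
  sInf {j : ℕ | valIter G T j s = valIter G T k s}

/-- `dest(s,b)` under a player-1 selector `η`: possible successors of `s` when
player 1 plays `η` and player 2 plays `b`. -/
def destSet (G : CGame S M) (η : S → M → ℝ) (s : S) (b : M) : Set S :=
  {t | ∃ a, η s a ≠ 0 ∧ G.δ s a b t ≠ 0}

/-- `OptSel(v,s)`: the set of optimal one-state player-1 selectors for `v` at `s`. -/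
noncomputable def OptSel (G : CGame S M) (v : S → ℝ) (s : S) : Set (M → ℝ) :=
  {x | IsDistOn (G.Γ₁ s) x ∧ pre1Sel G v s x = pre1 G v s}

/-- `CountOpt(v,s,x)`: the set of counter-optimal player-2 moves against `x`. -/
noncomputable def countOpt (G : CGame S M) (v : S → ℝ) (s : S) (x : M → ℝ) : Finset M :=
  (G.Γ₂ s).filter fun b => preSS G v s x (pureDist b) = pre1 G v s

/-- The support of a one-state selector, as a `Finset`. -/
noncomputable def fsupp (x : M → ℝ) : Finset M := Finset.univ.filter fun a => x a ≠ 0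

/-- `OptSelCount(v,s)`: pairs `(A,B)` such that some optimal selector has support `A`
and counter-optimal action set `B`. -/
noncomputable def optSelCount (G : CGame S M) (v : S → ℝ) (s : S) :
    Set (Finset M × Finset M) :=
  {p | ∃ x ∈ OptSel G v s, fsupp x = p.1 ∧ countOpt G v s x = p.2}

/-- A selector is `k`-uniform if every probability it assigns is of the form `i/j`
with `0 ≤ i ≤ j ≤ k`. -/
def KUniform (k : ℕ) (ξ : S → M → ℝ) : Prop :=
  ∀ s a, ∃ i j : ℕ, i ≤ j ∧ j ≤ k ∧ ξ s a = (i : ℝ) / (j : ℝ)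

end CGame
namespace MemAux

open CGame Finset

set_option linter.unusedSectionVars false

variable {S M : Type} [Fintype S] [DecidableEq S] [Fintype M] [DecidableEq M]

/-- uniform distribution on a finset -/
noncomputable def unif (A : Finset M) : M → ℝ := fun a => if a ∈ A then 1 / A.card else 0

lemma unif_isDistOn {A : Finset M} (h : A.Nonempty) : IsDistOn A (unif A) := by
  refine ⟨fun a => ?_, fun a ha => ?_, ?_⟩
  · unfold unif; split <;> positivity
  · by_contra hm; exact ha (by simp [unif, hm])
  · have hc : (A.card : ℝ) ≠ 0 := by
      exact_mod_cast Finset.card_ne_zero.mpr h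
    rw [show (∑ a, unif A a) = ∑ a ∈ Finset.univ.filter (· ∈ A), (1 / A.card : ℝ) by
      rw [Finset.sum_filter]; exact Finset.sum_congr rfl (fun a _ => rfl)]
    rw [Finset.filter_mem_eq_inter, Finset.univ_inter, Finset.sum_const, nsmul_eq_mul]
    field_simp

lemma pureDist_isDistOn {A : Finset M} {b : M} (hb : b ∈ A) : IsDistOn A (pureDist b) := by
  refine ⟨fun a => ?_, fun a ha => ?_, ?_⟩
  · unfold pureDist; split <;> norm_num
  · by_contra hm
    exact ha (by unfold pureDist; rw [if_neg]; rintro rfl; exact hm hb)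
  · simp [pureDist]

variable (G : CGame S M)

/-- one-step value of vector `v` at `s` when player 1 plays `x` and player 2 plays pure `b` -/
noncomputable def pb (v : S → ℝ) (s : S) (x : M → ℝ) (b : M) : ℝ :=
  ∑ a, ∑ t, x a * G.δ s a b t * v t

/-- best pure response of player 2 -/
noncomputable def low (v : S → ℝ) (s : S) (x : M → ℝ) : ℝ :=
  if h : (G.Γ₂ s).Nonempty then (G.Γ₂ s).inf' h (pb G v s x) else 0

/-- one-step player-1 value -/
noncomputable def up (v : S → ℝ) (s : S) : ℝ :=
  ⨆ x : {x : M → ℝ // IsDistOn (G.Γ₁ s) x}, low G v s x.1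

variable {G}

lemma pb_nonneg (hG : G.IsGame) {v : S → ℝ} (hv : ∀ t, 0 ≤ v t) {s x b}
    (hx : ∀ a, 0 ≤ x a) : 0 ≤ pb G v s x b := by
  apply Finset.sum_nonneg; intro a _; apply Finset.sum_nonneg; intro t _
  exact mul_nonneg (mul_nonneg (hx a) (hG.2.2.1 s a b t)) (hv t)

lemma pb_mono (hG : G.IsGame) {v w : S → ℝ} (hvw : ∀ t, v t ≤ w t) {s x b}
    (hx : ∀ a, 0 ≤ x a) : pb G v s x b ≤ pb G w s x b := by
  apply Finset.sum_le_sum; intro a _; apply Finset.sum_le_sum; intro t _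
  exact mul_le_mul_of_nonneg_left (hvw t) (mul_nonneg (hx a) (hG.2.2.1 s a b t))

lemma pb_const (hG : G.IsGame) {s x b} (hx : (∑ a, x a) = 1) (c : ℝ) :
    pb G (fun _ => c) s x b = c := by
  unfold pb
  have : ∀ a, (∑ t, x a * G.δ s a b t * c) = x a * c := by
    intro a
    rw [show (∑ t, x a * G.δ s a b t * c) = x a * c * ∑ t, G.δ s a b t by
      rw [Finset.mul_sum]; exact Finset.sum_congr rfl fun t _ => by ring]
    rw [hG.2.2.2 s a b, mul_one]
  rw [Finset.sum_congr rfl fun a _ => this a, ← Finset.sum_mul, hx, one_mul]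

lemma pb_sub_const (hG : G.IsGame) {v : S → ℝ} {s x b} (hx : (∑ a, x a) = 1) (c : ℝ) :
    pb G (fun t => v t - c) s x b = pb G v s x b - c := by
  have h1 : pb G (fun t => v t - c) s x b = pb G v s x b - pb G (fun _ => c) s x b := by
    unfold pb
    rw [← Finset.sum_sub_distrib]
    apply Finset.sum_congr rfl; intro a _
    rw [← Finset.sum_sub_distrib]
    apply Finset.sum_congr rfl; intro t _; ring
  rw [h1, pb_const hG hx]

lemma pb_smul {v : S → ℝ} {s x b} (c : ℝ) :
    pb G (fun t => c * v t) s x b = c * pb G v s x b := by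
  unfold pb
  rw [Finset.mul_sum]
  apply Finset.sum_congr rfl; intro a _
  rw [Finset.mul_sum]
  apply Finset.sum_congr rfl; intro t _; ring

lemma pb_le_one (hG : G.IsGame) {v : S → ℝ} (hv : ∀ t, v t ≤ 1) {s x b}
    (hx0 : ∀ a, 0 ≤ x a) (hx1 : (∑ a, x a) = 1) : pb G v s x b ≤ 1 := by
  have := pb_mono hG hv (x := x) (s := s) (b := b) hx0
  rw [pb_const hG hx1] at this; exact this

lemma low_le_pb (hG : G.IsGame) {v : S → ℝ} {s x b} (hb : b ∈ G.Γ₂ s) :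
    low G v s x ≤ pb G v s x b := by
  unfold low; rw [dif_pos (hG.2.1 s)]; exact Finset.inf'_le _ hb

lemma le_low (hG : G.IsGame) {v : S → ℝ} {s x c} (h : ∀ b ∈ G.Γ₂ s, c ≤ pb G v s x b) :
    c ≤ low G v s x := by
  unfold low; rw [dif_pos (hG.2.1 s)]; exact Finset.le_inf' _ _ h

lemma exists_low_eq (hG : G.IsGame) (v : S → ℝ) (s : S) (x : M → ℝ) :
    ∃ b ∈ G.Γ₂ s, low G v s x = pb G v s x b := by
  unfold low; rw [dif_pos (hG.2.1 s)]
  exact Finset.exists_mem_eq_inf' (hG.2.1 s) _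

lemma low_nonneg (hG : G.IsGame) {v : S → ℝ} (hv : ∀ t, 0 ≤ v t) {s x}
    (hx : ∀ a, 0 ≤ x a) : 0 ≤ low G v s x :=
  le_low hG fun b _ => pb_nonneg hG hv hx

lemma low_le_one (hG : G.IsGame) {v : S → ℝ} (hv : ∀ t, v t ≤ 1) {s x}
    (hx0 : ∀ a, 0 ≤ x a) (hx1 : (∑ a, x a) = 1) : low G v s x ≤ 1 := by
  obtain ⟨b, hb, he⟩ := exists_low_eq hG v s x
  rw [he]; exact pb_le_one hG hv hx0 hx1

lemma low_mono (hG : G.IsGame) {v w : S → ℝ} (hvw : ∀ t, v t ≤ w t) {s x}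
    (hx : ∀ a, 0 ≤ x a) : low G v s x ≤ low G w s x := by
  apply le_low hG; intro b hb
  exact (low_le_pb hG hb).trans (pb_mono hG hvw hx)

/-- if `v ≤ w + c` pointwise then `low v ≤ low w + c` -/
lemma low_shift (hG : G.IsGame) {v w : S → ℝ} {c : ℝ} (hvw : ∀ t, v t ≤ w t + c) {s x}
    (hx0 : ∀ a, 0 ≤ x a) (hx1 : (∑ a, x a) = 1) : low G v s x ≤ low G w s x + c := by
  obtain ⟨b, hb, he⟩ := exists_low_eq hG w s x
  calc low G v s x ≤ pb G v s x b := low_le_pb hG hb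
    _ ≤ pb G (fun t => w t + c) s x b := pb_mono hG hvw hx0
    _ = pb G w s x b + c := by
        have := pb_sub_const hG (v := fun t => w t + c) (s := s) (b := b) hx1 c
        simp only [add_sub_cancel_right] at this
        linarith [this]
    _ = low G w s x + c := by rw [he]

lemma dist1_nonempty (hG : G.IsGame) (s : S) : Nonempty {x : M → ℝ // IsDistOn (G.Γ₁ s) x} :=
  ⟨⟨unif (G.Γ₁ s), unif_isDistOn (hG.1 s)⟩⟩

lemma up_bddAbove (hG : G.IsGame) {v : S → ℝ} (hv : ∀ t, v t ≤ 1) (s : S) :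
    BddAbove (Set.range fun x : {x : M → ℝ // IsDistOn (G.Γ₁ s) x} => low G v s x.1) := by
  refine ⟨1, ?_⟩
  rintro r ⟨x, rfl⟩
  exact low_le_one hG hv x.2.1 x.2.2.2

lemma up_le (hG : G.IsGame) {v : S → ℝ} {s : S} {c : ℝ}
    (h : ∀ x : M → ℝ, IsDistOn (G.Γ₁ s) x → low G v s x ≤ c) : up G v s ≤ c := by
  haveI := dist1_nonempty hG s
  exact ciSup_le fun x => h x.1 x.2

lemma le_up (hG : G.IsGame) {v : S → ℝ} (hv : ∀ t, v t ≤ 1) {s : S} {x : M → ℝ}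
    (hx : IsDistOn (G.Γ₁ s) x) : low G v s x ≤ up G v s :=
  le_ciSup (up_bddAbove hG hv s) (⟨x, hx⟩ : {x : M → ℝ // IsDistOn (G.Γ₁ s) x})

lemma up_nonneg (hG : G.IsGame) {v : S → ℝ} (hv0 : ∀ t, 0 ≤ v t) (hv1 : ∀ t, v t ≤ 1)
    (s : S) : 0 ≤ up G v s := by
  have h := le_up hG hv1 (unif_isDistOn (hG.1 s)) (v := v)
  exact le_trans (low_nonneg hG hv0 (unif_isDistOn (hG.1 s)).1) h

lemma up_le_one (hG : G.IsGame) {v : S → ℝ} (hv : ∀ t, v t ≤ 1) (s : S) :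
    up G v s ≤ 1 :=
  up_le hG fun x hx => low_le_one hG hv hx.1 hx.2.2

lemma up_mono (hG : G.IsGame) {v w : S → ℝ} (hvw : ∀ t, v t ≤ w t) (hw : ∀ t, w t ≤ 1)
    (s : S) : up G v s ≤ up G w s :=
  up_le hG fun x hx => (low_mono hG hvw hx.1).trans (le_up hG hw hx)

lemma exists_near_up (hG : G.IsGame) (v : S → ℝ) (s : S) {η : ℝ} (hη : 0 < η) :
    ∃ x : M → ℝ, IsDistOn (G.Γ₁ s) x ∧ up G v s - η < low G v s x := by
  haveI := dist1_nonempty hG s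
  obtain ⟨x, hx⟩ := exists_lt_of_lt_ciSup (show up G v s - η < up G v s from
    sub_lt_self _ hη)
  exact ⟨x.1, x.2, hx⟩

variable (G) in
/-- undiscounted value iteration (with target clamp) -/
noncomputable def ubar (T : Set S) : ℕ → S → ℝ
  | 0 => fun s => if s ∈ T then 1 else 0
  | n + 1 => fun s => if s ∈ T then 1 else up G (ubar T n) s

variable (G) in
/-- discounted value iteration -/
noncomputable def dk (T : Set S) (lam : ℝ) : ℕ → S → ℝ
  | 0 => fun s => if s ∈ T then 1 else 0
  | n + 1 => fun s => if s ∈ T then 1 else lam * up G (dk T lam n) s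

lemma ubar_bounds (hG : G.IsGame) (T : Set S) :
    ∀ n, (∀ s, 0 ≤ ubar G T n s) ∧ (∀ s, ubar G T n s ≤ 1) := by
  intro n; induction n with
  | zero => constructor <;> intro s <;> simp only [ubar] <;> split <;> norm_num
  | succ n ih =>
    constructor <;> intro s <;> simp only [ubar] <;> split
    · norm_num
    · exact up_nonneg hG ih.1 ih.2 s
    · norm_num
    · exact up_le_one hG ih.2 s

lemma dk_bounds (hG : G.IsGame) (T : Set S) {lam : ℝ} (h0 : 0 ≤ lam) (h1 : lam ≤ 1) :
    ∀ n, (∀ s, 0 ≤ dk G T lam n s) ∧ (∀ s, dk G T lam n s ≤ 1) := by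
  intro n; induction n with
  | zero => constructor <;> intro s <;> simp only [dk] <;> split <;> norm_num
  | succ n ih =>
    constructor <;> intro s <;> simp only [dk] <;> split
    · norm_num
    · exact mul_nonneg h0 (up_nonneg hG ih.1 ih.2 s)
    · norm_num
    · calc lam * up G (dk G T lam n) s ≤ 1 * 1 :=
            mul_le_mul h1 (up_le_one hG ih.2 s) (up_nonneg hG ih.1 ih.2 s) (by norm_num)
        _ = 1 := by norm_num

lemma ubar_mono (hG : G.IsGame) (T : Set S) :
    ∀ n, ∀ s, ubar G T n s ≤ ubar G T (n + 1) s := by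
  intro n; induction n with
  | zero =>
    intro s; simp only [ubar]; split
    · norm_num
    · exact up_nonneg hG (ubar_bounds hG T 0).1 (ubar_bounds hG T 0).2 s
  | succ n ih =>
    intro s; simp only [ubar]; split
    · norm_num
    · exact up_mono hG ih (ubar_bounds hG T (n+1)).2 s

lemma dk_mono (hG : G.IsGame) (T : Set S) {lam : ℝ} (h0 : 0 ≤ lam) (h1 : lam ≤ 1) :
    ∀ n, ∀ s, dk G T lam n s ≤ dk G T lam (n + 1) s := by
  intro n; induction n with
  | zero =>
    intro s; simp only [dk]; split
    · norm_num
    · exact mul_nonneg h0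
        (up_nonneg hG (dk_bounds hG T h0 h1 0).1 (dk_bounds hG T h0 h1 0).2 s)
  | succ n ih =>
    intro s; simp only [dk]; split
    · norm_num
    · exact mul_le_mul_of_nonneg_left (up_mono hG ih (dk_bounds hG T h0 h1 (n+1)).2 s) h0

variable (G) in
noncomputable def Uval (T : Set S) : S → ℝ := fun s => ⨆ n, ubar G T n s

variable (G) in
noncomputable def vlam (T : Set S) (lam : ℝ) : S → ℝ := fun s => ⨆ n, dk G T lam n s

lemma iSup_bounds {g : ℕ → ℝ} (h0 : ∀ n, 0 ≤ g n) (h1 : ∀ n, g n ≤ 1) :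
    (∀ n, g n ≤ ⨆ m, g m) ∧ 0 ≤ (⨆ m, g m) ∧ (⨆ m, g m) ≤ 1 := by
  have hb : BddAbove (Set.range g) := ⟨1, by rintro r ⟨n, rfl⟩; exact h1 n⟩
  have hle : ∀ n, g n ≤ ⨆ m, g m := fun n => le_ciSup hb n
  exact ⟨hle, le_trans (h0 0) (hle 0), ciSup_le h1⟩

lemma Uval_spec (hG : G.IsGame) (T : Set S) :
    (∀ n s, ubar G T n s ≤ Uval G T s) ∧ (∀ s, 0 ≤ Uval G T s) ∧ (∀ s, Uval G T s ≤ 1) := by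
  refine ⟨fun n s => ?_, fun s => ?_, fun s => ?_⟩
  · exact (iSup_bounds (fun n => (ubar_bounds hG T n).1 s) (fun n => (ubar_bounds hG T n).2 s)).1 n
  · exact (iSup_bounds (fun n => (ubar_bounds hG T n).1 s) (fun n => (ubar_bounds hG T n).2 s)).2.1
  · exact (iSup_bounds (fun n => (ubar_bounds hG T n).1 s) (fun n => (ubar_bounds hG T n).2 s)).2.2

lemma vlam_spec (hG : G.IsGame) (T : Set S) {lam : ℝ} (h0 : 0 ≤ lam) (h1 : lam ≤ 1) :
    (∀ n s, dk G T lam n s ≤ vlam G T lam s) ∧ (∀ s, 0 ≤ vlam G T lam s) ∧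
      (∀ s, vlam G T lam s ≤ 1) := by
  refine ⟨fun n s => ?_, fun s => ?_, fun s => ?_⟩
  · exact (iSup_bounds (fun n => (dk_bounds hG T h0 h1 n).1 s) (fun n => (dk_bounds hG T h0 h1 n).2 s)).1 n
  · exact (iSup_bounds (fun n => (dk_bounds hG T h0 h1 n).1 s) (fun n => (dk_bounds hG T h0 h1 n).2 s)).2.1
  · exact (iSup_bounds (fun n => (dk_bounds hG T h0 h1 n).1 s) (fun n => (dk_bounds hG T h0 h1 n).2 s)).2.2

lemma Uval_mem (T : Set S) {s : S} (hs : s ∈ T) : Uval G T s = 1 := by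
  have : ∀ n, ubar G T n s = 1 := by intro n; cases n <;> simp [ubar, hs]
  unfold Uval
  rw [show (fun n => ubar G T n s) = fun _ => (1:ℝ) from funext this]
  exact ciSup_const

lemma vlam_mem (T : Set S) {lam : ℝ} {s : S} (hs : s ∈ T) : vlam G T lam s = 1 := by
  have : ∀ n, dk G T lam n s = 1 := by intro n; cases n <;> simp [dk, hs]
  unfold vlam
  rw [show (fun n => dk G T lam n s) = fun _ => (1:ℝ) from funext this]
  exact ciSup_const

/-- uniform (in `s`) approximation of a monotone bounded iteration by a finite stage -/
lemma uniform_approx {g : ℕ → S → ℝ} (hmono : ∀ n s, g n s ≤ g (n+1) s)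
    (h1 : ∀ n s, g n s ≤ 1) {ε : ℝ} (hε : 0 < ε) :
    ∃ k, ∀ s, (⨆ n, g n s) - ε ≤ g k s := by
  have hm : ∀ s, Monotone (fun n => g n s) := fun s =>
    monotone_nat_of_le_succ (fun n => hmono n s)
  have hk : ∀ s : S, ∃ k, (⨆ n, g n s) - ε < g k s := by
    intro s
    exact exists_lt_of_lt_ciSup (sub_lt_self _ hε)
  choose k hk using hk
  refine ⟨Finset.univ.sup k, fun s => ?_⟩
  exact le_trans (le_of_lt (hk s)) (hm s (Finset.le_sup (Finset.mem_univ s)))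

lemma low_smul (hG : G.IsGame) {v : S → ℝ} {s x} {c : ℝ} (hc : 0 ≤ c) :
    low G (fun t => c * v t) s x = c * low G v s x := by
  apply le_antisymm
  · obtain ⟨b, hb, he⟩ := exists_low_eq hG v s x
    calc low G (fun t => c * v t) s x ≤ pb G (fun t => c * v t) s x b := low_le_pb hG hb
      _ = c * pb G v s x b := pb_smul c
      _ = c * low G v s x := by rw [← he]
  · apply le_low hG; intro b hb
    rw [pb_smul c]
    exact mul_le_mul_of_nonneg_left (low_le_pb hG hb) hc

lemma up_smul_le (hG : G.IsGame) {v : S → ℝ} (hv0 : ∀ t, 0 ≤ v t) (hv1 : ∀ t, v t ≤ 1)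
    {c : ℝ} (hc0 : 0 ≤ c) (hc1 : c ≤ 1) (s : S) :
    c * up G v s ≤ up G (fun t => c * v t) s := by
  have hcv0 : ∀ t, 0 ≤ c * v t := fun t => mul_nonneg hc0 (hv0 t)
  have hcv1 : ∀ t, c * v t ≤ 1 := fun t =>
    le_trans (mul_le_mul hc1 (hv1 t) (hv0 t) zero_le_one) (by norm_num)
  rcases eq_or_lt_of_le hc0 with h | h
  · subst h
    rw [zero_mul]
    exact up_nonneg hG hcv0 hcv1 s
  · have key : up G v s ≤ up G (fun t => c * v t) s / c := by
      apply up_le hG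
      intro x hx
      rw [le_div_iff₀ h, mul_comm, ← low_smul hG hc0]
      exact le_up hG hcv1 hx
    calc c * up G v s ≤ c * (up G (fun t => c * v t) s / c) :=
          mul_le_mul_of_nonneg_left key hc0
      _ = up G (fun t => c * v t) s := by field_simp

lemma vlam_le_step (hG : G.IsGame) (T : Set S) {lam : ℝ} (h0 : 0 ≤ lam) (h1 : lam ≤ 1)
    {s : S} (hs : s ∉ T) : vlam G T lam s ≤ lam * up G (vlam G T lam) s := by
  unfold vlam
  apply ciSup_le
  intro n
  cases n with
  | zero =>
    simp only [dk, if_neg hs]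
    exact mul_nonneg h0 (up_nonneg hG (vlam_spec hG T h0 h1).2.1 (vlam_spec hG T h0 h1).2.2 s)
  | succ n =>
    simp only [dk, if_neg hs]
    exact mul_le_mul_of_nonneg_left
      (up_mono hG (fun t => (vlam_spec hG T h0 h1).1 n t) (vlam_spec hG T h0 h1).2.2 s) h0

lemma up_vlam_le (hG : G.IsGame) (T : Set S) {lam : ℝ} (h0 : 0 < lam) (h1 : lam ≤ 1)
    {s : S} (hs : s ∉ T) : up G (vlam G T lam) s ≤ vlam G T lam s / lam := by
  apply up_le hG
  intro x hx
  apply le_of_forall_pos_le_add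
  intro ε' hε'
  obtain ⟨k, hk⟩ := uniform_approx (g := dk G T lam)
    (fun n s => dk_mono hG T h0.le h1 n s) (fun n s => (dk_bounds hG T h0.le h1 n).2 s) hε'
  have hvw : ∀ t, vlam G T lam t ≤ dk G T lam k t + ε' := by
    intro t; have := hk t; unfold vlam; linarith
  calc low G (vlam G T lam) s x ≤ low G (dk G T lam k) s x + ε' :=
        low_shift hG hvw hx.1 hx.2.2
    _ ≤ up G (dk G T lam k) s + ε' :=
        add_le_add_left (le_up hG (fun t => (dk_bounds hG T h0.le h1 k).2 t) hx) _
    _ = dk G T lam (k+1) s / lam + ε' := by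
        simp only [dk, if_neg hs]
        rw [mul_div_cancel_left₀ _ (ne_of_gt h0)]
    _ ≤ vlam G T lam s / lam + ε' := by
        have := (vlam_spec hG T h0.le h1).1 (k+1) s
        gcongr

lemma low_Uval_le (hG : G.IsGame) (T : Set S) {s : S} (hs : s ∉ T) {x : M → ℝ}
    (hx : IsDistOn (G.Γ₁ s) x) : low G (Uval G T) s x ≤ Uval G T s := by
  apply le_of_forall_pos_le_add
  intro ε' hε'
  obtain ⟨k, hk⟩ := uniform_approx (g := ubar G T)
    (fun n s => ubar_mono hG T n s) (fun n s => (ubar_bounds hG T n).2 s) hε'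
  have hvw : ∀ t, Uval G T t ≤ ubar G T k t + ε' := by
    intro t; have := hk t; unfold Uval; linarith
  calc low G (Uval G T) s x ≤ low G (ubar G T k) s x + ε' := low_shift hG hvw hx.1 hx.2.2
    _ ≤ up G (ubar G T k) s + ε' :=
        add_le_add_left (le_up hG (fun t => (ubar_bounds hG T k).2 t) hx) _
    _ = ubar G T (k+1) s + ε' := by simp only [ubar, if_neg hs]
    _ ≤ Uval G T s + ε' := add_le_add_left ((Uval_spec hG T).1 (k+1) s) _

lemma pow_ubar_le_vlam (hG : G.IsGame) (T : Set S) {lam : ℝ} (h0 : 0 < lam) (h1 : lam ≤ 1) :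
    ∀ k s, lam ^ k * ubar G T k s ≤ vlam G T lam s := by
  intro k; induction k with
  | zero =>
    intro s
    rw [pow_zero, one_mul]
    simp only [ubar]
    split
    · rw [vlam_mem T ‹_›]
    · exact (vlam_spec hG T h0.le h1).2.1 s
  | succ k ih =>
    intro s
    by_cases hs : s ∈ T
    · simp only [ubar, if_pos hs]
      rw [vlam_mem T hs, mul_one]
      exact pow_le_one₀ h0.le h1
    · simp only [ubar, if_neg hs]
      have hpow0 : (0:ℝ) ≤ lam ^ k := pow_nonneg h0.le k
      have hpow1 : lam ^ k ≤ 1 := pow_le_one₀ h0.le h1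
      calc lam ^ (k+1) * up G (ubar G T k) s
          = lam * (lam ^ k * up G (ubar G T k) s) := by ring
        _ ≤ lam * up G (fun t => lam ^ k * ubar G T k t) s :=
            mul_le_mul_of_nonneg_left
              (up_smul_le hG (fun t => (ubar_bounds hG T k).1 t)
                (fun t => (ubar_bounds hG T k).2 t) hpow0 hpow1 s) h0.le
        _ ≤ lam * up G (vlam G T lam) s :=
            mul_le_mul_of_nonneg_left
              (up_mono hG (fun t => ih t) (vlam_spec hG T h0.le h1).2.2 s) h0.le
        _ ≤ lam * (vlam G T lam s / lam) :=
            mul_le_mul_of_nonneg_left (up_vlam_le hG T h0 h1 hs) h0.le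
        _ = vlam G T lam s := by field_simp

lemma sum_rearrange (f : S → ℝ) (s : S) (p q : M → ℝ) :
    (∑ a, ∑ b, ∑ t, p a * q b * G.δ s a b t * f t) = ∑ b, q b * pb G f s p b := by
  rw [Finset.sum_comm]
  apply Finset.sum_congr rfl; intro b _
  unfold pb
  rw [Finset.mul_sum]
  apply Finset.sum_congr rfl; intro a _
  rw [Finset.mul_sum]
  apply Finset.sum_congr rfl; intro t _; ring

lemma avg_ge {s : S} {y : M → ℝ} (hy : IsDistOn (G.Γ₂ s) y) {g : M → ℝ} {c : ℝ}
    (h : ∀ b ∈ G.Γ₂ s, c ≤ g b) : c ≤ ∑ b, y b * g b := by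
  have hc : (c : ℝ) = ∑ b, y b * c := by rw [← Finset.sum_mul, hy.2.2, one_mul]
  rw [hc]
  apply Finset.sum_le_sum
  intro b _
  by_cases hb : y b = 0
  · simp [hb]
  · exact mul_le_mul_of_nonneg_left (h b (hy.2.1 b hb)) (hy.1 b)

lemma avg_le {s : S} {y : M → ℝ} (hy : IsDistOn (G.Γ₂ s) y) {g : M → ℝ} {c : ℝ}
    (h : ∀ b ∈ G.Γ₂ s, g b ≤ c) : (∑ b, y b * g b) ≤ c := by
  have hc : (c : ℝ) = ∑ b, y b * c := by rw [← Finset.sum_mul, hy.2.2, one_mul]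
  conv_rhs => rw [hc]
  apply Finset.sum_le_sum
  intro b _
  by_cases hb : y b = 0
  · simp [hb]
  · exact mul_le_mul_of_nonneg_left (h b (hy.2.1 b hb)) (hy.1 b)

lemma reachW_succ_not_mem {σ₁ σ₂ : List S → S → M → ℝ} {T : Set S} {n w} {s : S}
    (hs : s ∉ T) :
    reachW G σ₁ σ₂ T (n+1) w s
      = ∑ b, σ₂ w s b * pb G (reachW G σ₁ σ₂ T n (w ++ [s])) s (σ₁ w s) b := by
  rw [show reachW G σ₁ σ₂ T (n+1) w s = if s ∈ T then 1 else ∑ a : M, ∑ b : M, ∑ t : S,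
      σ₁ w s a * σ₂ w s b * G.δ s a b t * reachW G σ₁ σ₂ T n (w ++ [s]) t from rfl]
  rw [if_neg hs, sum_rearrange]

lemma reachW_bounds (hG : G.IsGame) {σ₁ σ₂ : List S → S → M → ℝ} (hσ₁ : IsStrat1 G σ₁)
    (hσ₂ : IsStrat2 G σ₂) (T : Set S) :
    ∀ n w s, 0 ≤ reachW G σ₁ σ₂ T n w s ∧ reachW G σ₁ σ₂ T n w s ≤ 1 := by
  intro n; induction n with
  | zero =>
    intro w s
    rw [show reachW G σ₁ σ₂ T 0 w s = if s ∈ T then 1 else 0 from rfl]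
    split <;> norm_num
  | succ n ih =>
    intro w s
    by_cases hs : s ∈ T
    · rw [show reachW G σ₁ σ₂ T (n+1) w s = if s ∈ T then 1 else _ from rfl, if_pos hs]
      norm_num
    · rw [reachW_succ_not_mem hs]
      constructor
      · apply Finset.sum_nonneg; intro b _
        exact mul_nonneg ((hσ₂ w s).1 b)
          (pb_nonneg hG (fun t => (ih (w ++ [s]) t).1) (hσ₁ w s).1)
      · apply avg_le (hσ₂ w s)
        intro b _
        exact pb_le_one hG (fun t => (ih (w ++ [s]) t).2) (hσ₁ w s).1 (hσ₁ w s).2.2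

variable (G) in
/-- discounted `n`-step payoff, defined directly in "player-2-pure-response" form -/
noncomputable def disc (lam : ℝ) (σ₁ σ₂ : List S → S → M → ℝ) (T : Set S) :
    ℕ → List S → S → ℝ
  | 0 => fun _ _ => 0
  | n + 1 => fun w s =>
      if s ∈ T then 1
      else lam * ∑ b, σ₂ w s b * pb G (disc lam σ₁ σ₂ T n (w ++ [s])) s (σ₁ w s) b

lemma disc_nonneg (hG : G.IsGame) {lam : ℝ} (h0 : 0 ≤ lam)
    {σ₁ σ₂ : List S → S → M → ℝ} (hσ₁ : IsStrat1 G σ₁) (hσ₂ : IsStrat2 G σ₂) (T : Set S) :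
    ∀ n w s, 0 ≤ disc G lam σ₁ σ₂ T n w s := by
  intro n; induction n with
  | zero => intro w s; simp [disc]
  | succ n ih =>
    intro w s
    simp only [disc]
    split
    · norm_num
    · apply mul_nonneg h0
      apply Finset.sum_nonneg; intro b _
      exact mul_nonneg ((hσ₂ w s).1 b)
        (pb_nonneg hG (fun t => ih (w ++ [s]) t) (hσ₁ w s).1)

lemma disc_le_reachW (hG : G.IsGame) {lam : ℝ} (h0 : 0 ≤ lam) (h1 : lam ≤ 1)
    {σ₁ σ₂ : List S → S → M → ℝ} (hσ₁ : IsStrat1 G σ₁) (hσ₂ : IsStrat2 G σ₂) (T : Set S) :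
    ∀ n w s, disc G lam σ₁ σ₂ T n w s ≤ reachW G σ₁ σ₂ T n w s := by
  intro n; induction n with
  | zero => intro w s; simpa [disc] using (reachW_bounds hG hσ₁ hσ₂ T 0 w s).1
  | succ n ih =>
    intro w s
    by_cases hs : s ∈ T
    · rw [show reachW G σ₁ σ₂ T (n+1) w s = if s ∈ T then 1 else _ from rfl, if_pos hs]
      simp [disc, hs]
    · rw [reachW_succ_not_mem hs]
      simp only [disc, if_neg hs]
      have hsum : (∑ b, σ₂ w s b * pb G (disc G lam σ₁ σ₂ T n (w ++ [s])) s (σ₁ w s) b)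
          ≤ ∑ b, σ₂ w s b * pb G (reachW G σ₁ σ₂ T n (w ++ [s])) s (σ₁ w s) b := by
        apply Finset.sum_le_sum; intro b _
        exact mul_le_mul_of_nonneg_left
          (pb_mono hG (fun t => ih (w ++ [s]) t) (hσ₁ w s).1) ((hσ₂ w s).1 b)
      have hnn : 0 ≤ ∑ b, σ₂ w s b * pb G (disc G lam σ₁ σ₂ T n (w ++ [s])) s (σ₁ w s) b := by
        apply Finset.sum_nonneg; intro b _
        exact mul_nonneg ((hσ₂ w s).1 b)
          (pb_nonneg hG (fun t => disc_nonneg hG h0 hσ₁ hσ₂ T n (w ++ [s]) t) (hσ₁ w s).1)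
      calc lam * ∑ b, σ₂ w s b * pb G (disc G lam σ₁ σ₂ T n (w ++ [s])) s (σ₁ w s) b
          ≤ 1 * ∑ b, σ₂ w s b * pb G (disc G lam σ₁ σ₂ T n (w ++ [s])) s (σ₁ w s) b :=
            mul_le_mul_of_nonneg_right h1 hnn
        _ = _ := one_mul _
        _ ≤ _ := hsum

/-- key player-1 induction: the memoryless strategy from a near-optimal selector for
the discounted value guarantees the discounted payoff up to errors -/
lemma disc_ge_vlam (hG : G.IsGame) (T : Set S) {lam η : ℝ} (h0 : 0 < lam) (h1 : lam ≤ 1)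
    (hη : 0 ≤ η) {ξ : S → M → ℝ} (hξ : IsSel1 G ξ)
    (hlow : ∀ s, s ∉ T → vlam G T lam s / lam - η ≤ low G (vlam G T lam) s (ξ s))
    {σ₂ : List S → S → M → ℝ} (hσ₂ : IsStrat2 G σ₂) :
    ∀ n w s, vlam G T lam s - lam ^ n - n * η ≤ disc G lam (ml ξ) σ₂ T n w s := by
  intro n; induction n with
  | zero =>
    intro w s
    have := (vlam_spec hG T h0.le h1).2.2 s
    simp only [disc, pow_zero]
    push_cast
    linarith
  | succ n ih =>
    intro w s
    by_cases hs : s ∈ T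
    · simp only [disc, if_pos hs]
      have h2 := (vlam_spec hG T h0.le h1).2.2 s
      have h3 : (0:ℝ) ≤ lam ^ (n+1) := pow_nonneg h0.le _
      have h4 : (0:ℝ) ≤ (n+1 : ℕ) * η := mul_nonneg (by positivity) hη
      linarith
    · simp only [disc, if_neg hs]
      set c : ℝ := lam ^ n + n * η with hc
      have hpb : ∀ b ∈ G.Γ₂ s, vlam G T lam s / lam - η - c
          ≤ pb G (disc G lam (ml ξ) σ₂ T n (w ++ [s])) s (ξ s) b := by
        intro b hb
        have step1 : pb G (fun t => vlam G T lam t - c) s (ξ s) b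
            ≤ pb G (disc G lam (ml ξ) σ₂ T n (w ++ [s])) s (ξ s) b := by
          apply pb_mono hG _ (hξ s).1
          intro t
          have := ih (w ++ [s]) t
          simp only [hc]
          linarith
        rw [pb_sub_const hG (hξ s).2.2] at step1
        have step2 : vlam G T lam s / lam - η ≤ pb G (vlam G T lam) s (ξ s) b :=
          le_trans (hlow s hs) (low_le_pb hG hb)
        linarith
      have hsum : vlam G T lam s / lam - η - c
          ≤ ∑ b, σ₂ w s b * pb G (disc G lam (ml ξ) σ₂ T n (w ++ [s])) s (ξ s) b :=
        avg_ge (hσ₂ w s) hpb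
      have hmul := mul_le_mul_of_nonneg_left hsum h0.le
      have hid : lam * (vlam G T lam s / lam - η - c)
          = vlam G T lam s - lam * η - lam ^ (n+1) - lam * (n * η) := by
        field_simp [hc]; ring
      rw [hid] at hmul
      have e1 : lam * η ≤ η := by nlinarith
      have e2 : lam * (n * η) ≤ n * η := by nlinarith [mul_nonneg (Nat.cast_nonneg (α := ℝ) n) hη]
      have : vlam G T lam s - lam ^ (n+1) - (n+1 : ℕ) * η
          ≤ vlam G T lam s - lam * η - lam ^ (n+1) - lam * (n * η) := by
        push_cast
        nlinarith
      calc vlam G T lam s - lam ^ (n+1) - (n+1 : ℕ) * η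
          ≤ _ := this
        _ ≤ _ := hmul
      -- note: goal matches since `ml ξ w s = ξ s` definitionally

lemma strat1_ne (hG : G.IsGame) : Nonempty {σ : List S → S → M → ℝ // IsStrat1 G σ} :=
  ⟨⟨fun _ s => unif (G.Γ₁ s), fun _ s => unif_isDistOn (hG.1 s)⟩⟩

lemma strat2_ne (hG : G.IsGame) : Nonempty {σ : List S → S → M → ℝ // IsStrat2 G σ} :=
  ⟨⟨fun _ s => unif (G.Γ₂ s), fun _ s => unif_isDistOn (hG.2.1 s)⟩⟩

lemma prReach_bddAbove (hG : G.IsGame) {σ₁ σ₂ : List S → S → M → ℝ}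
    (hσ₁ : IsStrat1 G σ₁) (hσ₂ : IsStrat2 G σ₂) (T : Set S) (s : S) :
    BddAbove (Set.range fun n : ℕ => reachW G σ₁ σ₂ T n [] s) := by
  refine ⟨1, ?_⟩; rintro r ⟨n, rfl⟩; exact (reachW_bounds hG hσ₁ hσ₂ T n [] s).2

lemma prReach_nonneg (hG : G.IsGame) {σ₁ σ₂ : List S → S → M → ℝ}
    (hσ₁ : IsStrat1 G σ₁) (hσ₂ : IsStrat2 G σ₂) (T : Set S) (s : S) :
    0 ≤ prReach G σ₁ σ₂ T s :=
  le_trans (reachW_bounds hG hσ₁ hσ₂ T 0 [] s).1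
    (le_ciSup (prReach_bddAbove hG hσ₁ hσ₂ T s) 0)

/-- existence of a counter strategy for player 2 witnessing `valReach ≤ Uval` -/
lemma exists_counter (hG : G.IsGame) (T : Set S) {σ₁ : List S → S → M → ℝ}
    (hσ₁ : IsStrat1 G σ₁) :
    ∃ σ₂, IsStrat2 G σ₂ ∧ ∀ n w s, reachW G σ₁ σ₂ T n w s ≤ Uval G T s := by
  have hbs : ∀ w : List S, ∀ s : S, ∃ b ∈ G.Γ₂ s, ∀ b' ∈ G.Γ₂ s,
      pb G (Uval G T) s (σ₁ w s) b ≤ pb G (Uval G T) s (σ₁ w s) b' :=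
    fun w s => Finset.exists_min_image _ _ (hG.2.1 s)
  choose bf hbf1 hbf2 using hbs
  refine ⟨fun w s => pureDist (bf w s), fun w s => pureDist_isDistOn (hbf1 w s), ?_⟩
  intro n
  induction n with
  | zero =>
    intro w s
    rw [show reachW G σ₁ _ T 0 w s = if s ∈ T then 1 else 0 from rfl]
    split
    · rw [Uval_mem T ‹_›]
    · exact (Uval_spec hG T).2.1 s
  | succ n ih =>
    intro w s
    by_cases hs : s ∈ T
    · rw [show reachW G σ₁ _ T (n+1) w s = if s ∈ T then 1 else _ from rfl, if_pos hs,
        Uval_mem T hs]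
    · rw [reachW_succ_not_mem hs]
      have hsum : (∑ b, pureDist (bf w s) b
            * pb G (reachW G σ₁ (fun w s => pureDist (bf w s)) T n (w ++ [s])) s (σ₁ w s) b)
          = pb G (reachW G σ₁ (fun w s => pureDist (bf w s)) T n (w ++ [s])) s (σ₁ w s)
              (bf w s) := by
        simp [pureDist, ite_mul]
      rw [hsum]
      calc pb G (reachW G σ₁ (fun w s => pureDist (bf w s)) T n (w ++ [s])) s (σ₁ w s)
              (bf w s)
          ≤ pb G (Uval G T) s (σ₁ w s) (bf w s) :=
            pb_mono hG (fun t => ih (w ++ [s]) t) (hσ₁ w s).1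
        _ ≤ low G (Uval G T) s (σ₁ w s) := le_low hG (hbf2 w s)
        _ ≤ Uval G T s := low_Uval_le hG T hs (hσ₁ w s)

lemma valReach_le_Uval (hG : G.IsGame) (T : Set S) (s : S) :
    valReach G T s ≤ Uval G T s := by
  haveI := strat1_ne hG
  apply ciSup_le
  rintro ⟨σ₁, hσ₁⟩
  obtain ⟨σ₂, hσ₂, hb⟩ := exists_counter hG T hσ₁
  have hpr : prReach G σ₁ σ₂ T s ≤ Uval G T s := ciSup_le fun n => hb n [] s
  refine le_trans (ciInf_le ?_ (⟨σ₂, hσ₂⟩ : {σ // IsStrat2 G σ})) hpr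
  refine ⟨0, ?_⟩
  rintro r ⟨σ', rfl⟩
  exact prReach_nonneg hG hσ₁ σ'.2 T s

end MemAux

/-- **Memoryless ε-optimal strategies for concurrent reachability games.**
For every concurrent game structure `G` with target set `T` and every `ε > 0`,
there is a player-1 selector `ξ` (inducing the memoryless strategy `ml ξ`) such
that for every state `s`, `inf_{σ₂} Pr_s^{ml ξ, σ₂}(Reach T) ≥ ⟨1⟩val(Reach T)(s) − ε`. -/
theorem memoryless_eps_optimal_reach
    {S M : Type} [Fintype S] [DecidableEq S] [Fintype M] [DecidableEq M]
    (G : CGame S M) (hG : G.IsGame) (T : Set S) (ε : ℝ) (hε : 0 < ε) :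
    ∃ ξ : S → M → ℝ, CGame.IsSel1 G ξ ∧
      ∀ s : S, CGame.valReach G T s - ε ≤ CGame.valReachUnder G (CGame.ml ξ) T s := by
  classical
  haveI := MemAux.strat2_ne hG
  -- stage 1: approximate the value iteration limit uniformly
  obtain ⟨k₀, hk₀⟩ := MemAux.uniform_approx (g := MemAux.ubar G T)
    (fun n s => MemAux.ubar_mono hG T n s) (fun n s => (MemAux.ubar_bounds hG T n).2 s)
    (show (0:ℝ) < ε / 8 by linarith)
  have hk₀' : ∀ s, MemAux.Uval G T s - ε / 8 ≤ MemAux.ubar G T k₀ s := fun s => hk₀ s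
  -- stage 2: choose the discount factor
  set m : ℝ := min (ε / 8) (1 / 2) with hm
  have hm0 : 0 < m := by positivity
  have hm2 : m ≤ 1 / 2 := min_le_right _ _
  have hmε : m ≤ ε / 8 := min_le_left _ _
  have hk1 : (1 : ℝ) ≤ (k₀ : ℝ) + 1 := by
    have := Nat.cast_nonneg (α := ℝ) k₀; linarith
  set lam : ℝ := 1 - m / ((k₀ : ℝ) + 1) with hlam
  have hq0 : 0 < m / ((k₀ : ℝ) + 1) := by positivity
  have hq1 : m / ((k₀ : ℝ) + 1) ≤ 1 / 2 := by
    calc m / ((k₀ : ℝ) + 1) ≤ m / 1 :=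
          div_le_div_of_nonneg_left hm0.le one_pos hk1
      _ = m := div_one m
      _ ≤ 1 / 2 := hm2
  have h0 : 0 < lam := by rw [hlam]; linarith
  have h1 : lam < 1 := by rw [hlam]; linarith
  have hpow : 1 - ε / 8 ≤ lam ^ k₀ := by
    have hb := one_add_mul_le_pow (a := -(m / ((k₀ : ℝ) + 1))) (by linarith) k₀
    have hfrac : (k₀ : ℝ) * (m / ((k₀ : ℝ) + 1)) ≤ m := by
      rw [← mul_div_assoc, div_le_iff₀ (by positivity)]
      nlinarith [Nat.cast_nonneg (α := ℝ) k₀]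
    have heq : (1 : ℝ) + -(m / ((k₀ : ℝ) + 1)) = lam := by rw [hlam]; ring
    rw [heq] at hb
    have : (1 : ℝ) + (k₀ : ℝ) * -(m / ((k₀ : ℝ) + 1)) ≥ 1 - m := by
      have := hfrac; linarith
    linarith
  -- stage 3: the discounted value approximates the value iteration limit
  have hv : ∀ s, MemAux.Uval G T s - ε / 4 ≤ MemAux.vlam G T lam s := by
    intro s
    have hub := MemAux.pow_ubar_le_vlam hG T h0 h1.le k₀ s
    have hub0 := (MemAux.ubar_bounds hG T k₀).1 s
    have hub1 := (MemAux.ubar_bounds hG T k₀).2 s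
    have hks := hk₀' s
    nlinarith [pow_le_one₀ h0.le h1.le (n := k₀)]
  -- stage 4: horizon and selector slack
  obtain ⟨N, hN⟩ := exists_pow_lt_of_lt_one (show (0:ℝ) < ε / 8 by linarith) h1
  set η : ℝ := ε / (8 * ((N : ℝ) + 1)) with hηdef
  have hη : 0 < η := by positivity
  have hNη : (N : ℝ) * η ≤ ε / 8 := by
    have h8 : ((N : ℝ) + 1) * η = ε / 8 := by
      rw [hηdef]; field_simp
    nlinarith
  -- stage 5: the near-optimal selector
  have hxs : ∀ s : S, ∃ x, CGame.IsDistOn (G.Γ₁ s) x ∧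
      (s ∉ T → MemAux.vlam G T lam s / lam - η ≤ MemAux.low G (MemAux.vlam G T lam) s x) := by
    intro s
    by_cases hs : s ∈ T
    · exact ⟨MemAux.unif (G.Γ₁ s), MemAux.unif_isDistOn (hG.1 s), fun h => absurd hs h⟩
    · obtain ⟨x, hx, hl⟩ := MemAux.exists_near_up hG (MemAux.vlam G T lam) s hη
      refine ⟨x, hx, fun _ => ?_⟩
      have hup : MemAux.vlam G T lam s / lam ≤ MemAux.up G (MemAux.vlam G T lam) s := by
        rw [div_le_iff₀ h0, mul_comm]
        exact MemAux.vlam_le_step hG T h0.le h1.le hs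
      linarith
  choose ξ hξ1 hξ2 using hxs
  refine ⟨ξ, hξ1, ?_⟩
  intro s
  have hmlstrat : CGame.IsStrat1 G (CGame.ml ξ) := fun _ s => hξ1 s
  -- lower bound on the value under the memoryless strategy
  have hRHS : MemAux.vlam G T lam s - ε / 4 ≤ CGame.valReachUnder G (CGame.ml ξ) T s := by
    apply le_ciInf
    rintro ⟨σ₂, hσ₂⟩
    have hd := MemAux.disc_ge_vlam hG T h0 h1.le hη.le hξ1 hξ2 hσ₂ N [] s
    have hdr := MemAux.disc_le_reachW hG h0.le h1.le hmlstrat hσ₂ T N [] s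
    have hrp : CGame.reachW G (CGame.ml ξ) σ₂ T N [] s ≤ CGame.prReach G (CGame.ml ξ) σ₂ T s :=
      le_ciSup (MemAux.prReach_bddAbove hG hmlstrat hσ₂ T s) N
    linarith
  have hLHS := MemAux.valReach_le_Uval hG T s
  have hvs := hv s
  linarith
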